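/- Let B ⊆ {0,1,∗}^n be a set of restrictions and suppose there is an injective map encode : B → {0,1,∗}^n × {0,1}^m such that whenever encode(ρ) = (ρ', a), the restriction ρ' extends ρ by exactly t coordinates: supp(ρ) ⊆ supp(ρ') and |supp(ρ') \ supp(ρ)| = t (where supp(σ) = σ^{−1}({0,1})). Then Pr_{ρ←R_p}[ρ ∈ B] ≤ 2^m · (2p/(1−p))^t. -/

import Mathlib

open Finset

/-- The support of a restriction: the coordinates fixed to 0 or 1. -/
def suppR {n : ℕ} (σ : Fin n → Option Bool) : Finset (Fin n) :=
  Finset.univ.filter fun i => σ i ≠ none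

lemma weight_eq {n : ℕ} (p : ℝ) (σ : Fin n → Option Bool) :
    (∏ i, (if σ i = none then p else (1 - p) / 2))
      = p ^ (n - (suppR σ).card) * ((1 - p) / 2) ^ (suppR σ).card := by
  rw [← Finset.prod_filter_mul_prod_filter_not Finset.univ (fun i => σ i = none)]
  have h1 : ∏ i ∈ Finset.univ.filter (fun i => σ i = none),
      (if σ i = none then p else (1 - p) / 2) = p ^ (n - (suppR σ).card) := by
    rw [Finset.prod_congr rfl (fun i hi => by
      simp only [Finset.mem_filter] at hi; rw [if_pos hi.2]), Finset.prod_const]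
    congr 1
    have := Finset.card_filter_add_card_filter_not (s := Finset.univ)
      (p := fun i : Fin n => σ i = none)
    simp only [Finset.card_univ, Fintype.card_fin] at this
    have h2 : (Finset.univ.filter (fun i : Fin n => ¬ σ i = none)).card = (suppR σ).card := rfl
    omega
  have h2 : ∏ i ∈ Finset.univ.filter (fun i => ¬ σ i = none),
      (if σ i = none then p else (1 - p) / 2) = ((1 - p) / 2) ^ (suppR σ).card := by
    rw [Finset.prod_congr rfl (fun i hi => by
      simp only [Finset.mem_filter] at hi; rw [if_neg hi.2]), Finset.prod_const]
    rfl
  rw [h1, h2]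

lemma weight_sum_one {n : ℕ} (p : ℝ) :
    ∑ σ : Fin n → Option Bool, (∏ i, (if σ i = none then p else (1 - p) / 2)) = 1 := by
  have : ∀ σ : Fin n → Option Bool, σ ∈ Fintype.piFinset (fun _ : Fin n => (Finset.univ : Finset (Option Bool))) := by
    intro σ; simp
  rw [show (Finset.univ : Finset (Fin n → Option Bool))
      = Fintype.piFinset (fun _ : Fin n => (Finset.univ : Finset (Option Bool))) by
    ext σ; simp]
  rw [← Finset.prod_univ_sum (fun _ => (Finset.univ : Finset (Option Bool)))
    (fun _ b => if b = none then p else (1 - p) / 2)]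
  have : ∀ i : Fin n, ∑ b : Option Bool, (if b = none then p else (1 - p) / 2) = 1 := by
    intro i
    rw [Fintype.sum_option]
    simp; ring
  rw [Finset.prod_congr rfl (fun i _ => this i), Finset.prod_const_one]

/-- the Razborov encoding argument. If every bad restriction can be injectively
encoded as a restriction extending it by exactly t coordinates plus m auxiliary bits, then the
R_p-probability of the bad set is at most 2^m · (2p/(1−p))^t. -/
theorem encoding_argument {n m t : ℕ} (p : ℝ) (hp0 : 0 ≤ p) (hp1 : p < 1)
    (B : Finset (Fin n → Option Bool))
    (encode : (Fin n → Option Bool) → (Fin n → Option Bool) × (Fin m → Bool))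
    (hinj : Set.InjOn encode B)
    (hext : ∀ ρ ∈ B, suppR ρ ⊆ suppR (encode ρ).1 ∧ (suppR (encode ρ).1 \ suppR ρ).card = t) :
    ∑ ρ ∈ B, (∏ i, (if ρ i = none then p else (1 - p) / 2))
      ≤ 2 ^ m * (2 * p / (1 - p)) ^ t := by
  have hq : (0:ℝ) < (1 - p) / 2 := by linarith
  set q : ℝ := (1 - p) / 2 with hqdef
  set r : ℝ := 2 * p / (1 - p) with hrdef
  have hr0 : 0 ≤ r := by
    apply div_nonneg (by linarith) (by linarith)
  have hrq : r = p / q := by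
    rw [hrdef, hqdef]; field_simp
  have key : ∀ ρ ∈ B, (∏ i, (if ρ i = none then p else q))
      = r ^ t * ∏ i, (if (encode ρ).1 i = none then p else q) := by
    intro ρ hρ
    obtain ⟨hsub, hcard⟩ := hext ρ hρ
    rw [weight_eq, weight_eq]
    set s := (suppR ρ).card
    set s' := (suppR (encode ρ).1).card
    have hs' : s' = s + t := by
      have h1 := Finset.card_sdiff_of_subset hsub
      have h2 := Finset.card_le_card hsub
      omega
    have hsn : s' ≤ n := by
      have := Finset.card_le_card (Finset.subset_univ (suppR (encode ρ).1))
      simpa using this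
    have hrt : r ^ t * q ^ t = p ^ t := by
      rw [hrq, div_pow, div_mul_cancel₀]
      positivity
    have hn : n - s = (n - s') + t := by omega
    rw [hn, hs', pow_add, pow_add, ← hrt]
    ring
  rw [Finset.sum_congr rfl key, ← Finset.mul_sum]
  have hbound : ∑ ρ ∈ B, (∏ i, (if (encode ρ).1 i = none then p else q)) ≤ 2 ^ m := by
    have hnonneg : ∀ x : (Fin n → Option Bool) × (Fin m → Bool),
        0 ≤ ∏ i, (if x.1 i = none then p else q) := by
      intro x
      apply Finset.prod_nonneg
      intro i _
      split <;> [exact hp0; exact le_of_lt hq]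
    calc ∑ ρ ∈ B, (∏ i, (if (encode ρ).1 i = none then p else q))
        = ∑ x ∈ B.image encode, (∏ i, (if x.1 i = none then p else q)) := by
          rw [Finset.sum_image (fun a ha b hb hab => hinj ha hb hab)]
      _ ≤ ∑ x : (Fin n → Option Bool) × (Fin m → Bool), (∏ i, (if x.1 i = none then p else q)) := by
          apply Finset.sum_le_sum_of_subset_of_nonneg (Finset.subset_univ _)
          intro x _ _
          exact hnonneg x
      _ = ∑ σ : Fin n → Option Bool, ∑ _a : Fin m → Bool,
            (∏ i, (if σ i = none then p else q)) := by
          rw [Fintype.sum_prod_type]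
      _ = 2 ^ m * ∑ σ : Fin n → Option Bool, (∏ i, (if σ i = none then p else q)) := by
          simp only [Finset.sum_const, Finset.card_univ, nsmul_eq_mul]
          rw [← Finset.mul_sum]
          congr 1
          simp [Fintype.card_fun]
      _ = 2 ^ m := by rw [weight_sum_one]; ring
  calc r ^ t * ∑ ρ ∈ B, (∏ i, (if (encode ρ).1 i = none then p else q))
      ≤ r ^ t * 2 ^ m := by
        apply mul_le_mul_of_nonneg_left hbound (pow_nonneg hr0 t)
    _ = 2 ^ m * r ^ t := by ring
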